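/- Let σ be a regular infinite cardinal. There exists a family {A_α : α < σ⁺} of subsets of σ such that |A_α| = σ for every α < σ⁺ and |A_α ∩ A_β| < σ for all α ≠ β, and moreover for every choice of sets A'_α ⊆ A_α with |A'_α| < σ, the family ⟨A_α \ A'_α⟩_{α<σ⁺} is not point-< σ⁺. -/

import Mathlib

set_option autoImplicit false

universe u

open Cardinal

namespace ADAux

open scoped Classical

variable (σ : Cardinal.{u})

/-- The "ground set": ordinals below `σ.ord`. -/
abbrev Om : Type (u+1) := ↥(Set.Iio σ.ord)

theorem mk_Om : #(Om σ) = Cardinal.lift.{u+1} σ := by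
  show #(Set.Iio σ.ord) = _
  rw [Ordinal.mk_Iio_ordinal, Cardinal.card_ord]

theorem mk_lt_of_bounded (hσ : σ.IsRegular) {b : Ordinal.{u}} (hb : b < σ.ord)
    (s : Set (Om σ)) (hs : ∀ x ∈ s, (x : Ordinal.{u}) < b) :
    Cardinal.mk s < Cardinal.lift.{u+1} σ := by
  have hle : #s ≤ #(Set.Iio b) :=
    Cardinal.mk_le_of_injective (f := fun x : s => (⟨x.1.1, hs x.1 x.2⟩ : Set.Iio b))
      (by intro x y hxy; apply Subtype.ext; apply Subtype.ext; have h2 := congrArg Subtype.val hxy; exact h2)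
  refine hle.trans_lt ?_
  rw [Ordinal.mk_Iio_ordinal]
  exact Cardinal.lift_lt.2 (Cardinal.lt_ord.1 hb)

/-- Extension step: given at most `σ` functions, there is one eventually different
from all of them. -/
theorem exists_ed (hσ : σ.IsRegular) {ι : Type (u+1)} (g : ι → Om σ → Om σ)
    (hι : #ι ≤ Cardinal.lift.{u+1} σ) :
    ∃ f : Om σ → Om σ, ∀ j, #{i : Om σ | f i = g j i} < Cardinal.lift.{u+1} σ := by
  obtain ⟨u⟩ : Nonempty (ι ↪ Om σ) := by
    rw [← Cardinal.le_def, mk_Om]; exact hι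
  set Bad : Om σ → Set (Om σ) := fun i => (fun j => g j i) '' {j | u j < i} with hBad
  have hBadlt : ∀ i, #(Bad i) < #(Om σ) := by
    intro i
    rw [mk_Om]
    refine Cardinal.mk_image_le.trans_lt ?_
    have hle : #{j | u j < i} ≤ #(Set.Iio (i : Ordinal.{u})) :=
      Cardinal.mk_le_of_injective
        (f := fun x : {j | u j < i} =>
          (⟨(u x.1 : Ordinal.{u}), Set.mem_Iio.2 (Subtype.coe_lt_coe.2 x.2)⟩ :
            Set.Iio (i : Ordinal.{u})))
        (by intro x y hxy; apply Subtype.ext; apply u.injective; apply Subtype.ext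
            have h2 := congrArg Subtype.val hxy; exact h2)
    refine hle.trans_lt ?_
    rw [Ordinal.mk_Iio_ordinal]
    exact Cardinal.lift_lt.2 (Cardinal.lt_ord.1 i.2)
  have hc : ∀ i, ∃ v, v ∉ Bad i := by
    intro i
    by_contra h
    push_neg at h
    have hlt := hBadlt i
    rw [Set.eq_univ_of_forall h, Cardinal.mk_univ] at hlt
    exact hlt.false
  choose f hf using hc
  refine ⟨f, fun j => ?_⟩
  have hlim := Cardinal.isSuccLimit_ord hσ.aleph0_le
  refine mk_lt_of_bounded σ hσ (hlim.succ_lt (u j).2) _ ?_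
  intro x hx
  rw [Order.lt_succ_iff]
  by_contra hgt
  have hlt : u j < x := Subtype.coe_lt_coe.1 (not_le.1 hgt)
  exact hf x ⟨j, hlt, hx.symm⟩

noncomputable def step : ∀ α : Ordinal.{u}, (∀ β, β < α → (Om σ → Om σ)) → Om σ → Om σ :=
  fun α ih =>
    if h : ∃ f : Om σ → Om σ,
        ∀ β (hβ : β < α), #{i : Om σ | f i = ih β hβ i} < Cardinal.lift.{u+1} σ
    then h.choose else fun i => i

noncomputable def F : Ordinal.{u} → Om σ → Om σ :=
  Ordinal.lt_wf.fix (step σ)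

theorem F_eq (α : Ordinal.{u}) : F σ α = step σ α (fun β _ => F σ β) :=
  Ordinal.lt_wf.fix_eq _ _

theorem F_spec (hσ : σ.IsRegular) : ∀ α < (Order.succ σ).ord, ∀ β < α,
    #{i : Om σ | F σ α i = F σ β i} < Cardinal.lift.{u+1} σ := by
  intro α hα β hβ
  have hex : ∃ f : Om σ → Om σ,
      ∀ γ (hγ : γ < α), #{i : Om σ | f i = F σ γ i} < Cardinal.lift.{u+1} σ := by
    have hcard : #(↥(Set.Iio α)) ≤ Cardinal.lift.{u+1} σ := by
      rw [Ordinal.mk_Iio_ordinal]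
      exact Cardinal.lift_le.2 (Order.lt_succ_iff.1 (Cardinal.lt_ord.1 hα))
    obtain ⟨f, hf⟩ := exists_ed σ hσ (fun b : ↥(Set.Iio α) => F σ b.1) hcard
    exact ⟨f, fun γ hγ => hf ⟨γ, hγ⟩⟩
  have h1 : F σ α = hex.choose := by
    rw [F_eq]
    exact dif_pos hex
  rw [h1]
  exact hex.choose_spec β hβ

theorem F_pairwise (hσ : σ.IsRegular) : ∀ α < (Order.succ σ).ord, ∀ β < (Order.succ σ).ord,
    α ≠ β → #{i : Om σ | F σ α i = F σ β i} < Cardinal.lift.{u+1} σ := by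
  intro α hα β hβ hne
  rcases hne.lt_or_gt with h | h
  · have hs : {i : Om σ | F σ α i = F σ β i} = {i : Om σ | F σ β i = F σ α i} := by
      ext i; exact eq_comm
    rw [hs]
    exact F_spec σ hσ β hβ α h
  · exact F_spec σ hσ α hα β h

end ADAux

/-- For every regular infinite cardinal `σ` there is an almost disjoint family
`{A_α : α < σ⁺}` of subsets of `σ` of size `σ` (pairwise intersections of size `< σ`)
such that no removal of fewer than `σ` points from each member yields a point-`< σ⁺`
family. -/
theorem exists_ad_family_not_pointLt_succ (σ : Cardinal.{u}) (hσ : σ.IsRegular) :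
    ∃ A : Ordinal.{u} → Set Ordinal.{u},
      (∀ α < (Order.succ σ).ord, A α ⊆ Set.Iio σ.ord ∧
        Cardinal.mk ↥(A α) = Cardinal.lift.{u+1} σ) ∧
      (∀ α < (Order.succ σ).ord, ∀ β < (Order.succ σ).ord, α ≠ β →
        Cardinal.mk ↥(A α ∩ A β) < Cardinal.lift.{u+1} σ) ∧
      ∀ A' : Ordinal.{u} → Set Ordinal.{u},
        (∀ α < (Order.succ σ).ord, A' α ⊆ A α ∧
          Cardinal.mk ↥(A' α) < Cardinal.lift.{u+1} σ) →
        ∃ I : Set Ordinal.{u}, I ⊆ Set.Iio (Order.succ σ).ord ∧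
          Cardinal.mk ↥I = Cardinal.lift.{u+1} (Order.succ σ) ∧
          (⋂ α ∈ I, (A α \ A' α)).Nonempty := by
  -- a pairing bijection on the ground set
  have hmul : #(ADAux.Om σ × ADAux.Om σ) = #(ADAux.Om σ) := by
    rw [Cardinal.mk_prod, Cardinal.lift_id, ADAux.mk_Om,
      Cardinal.mul_eq_self (Cardinal.aleph0_le_lift.2 hσ.aleph0_le)]
  obtain ⟨e⟩ : Nonempty (ADAux.Om σ ≃ ADAux.Om σ × ADAux.Om σ) := Cardinal.eq.1 hmul.symm
  -- graphs of the eventually different functions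
  set G : Ordinal.{u} → Set (ADAux.Om σ) := fun α => {x | (e x).2 = ADAux.F σ α (e x).1} with hG
  set A : Ordinal.{u} → Set Ordinal.{u} := fun α => Subtype.val '' G α with hA
  have hsub : ∀ α, A α ⊆ Set.Iio σ.ord := by
    rintro α _ ⟨x, _, rfl⟩; exact x.2
  have hGmk : ∀ α, #(G α) = Cardinal.lift.{u+1} σ := by
    intro α
    rw [← ADAux.mk_Om σ]
    refine Cardinal.mk_congr ⟨fun x => (e x.1).1,
      fun i => ⟨e.symm (i, ADAux.F σ α i), by simp [hG]⟩, ?_, ?_⟩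
    · intro x
      apply Subtype.ext
      show e.symm ((e x.1).1, ADAux.F σ α (e x.1).1) = x.1
      rw [← x.2]
      simp
    · intro i
      show (e (e.symm (i, ADAux.F σ α i))).1 = i
      simp
  have hAmk : ∀ α, #(A α) = Cardinal.lift.{u+1} σ := by
    intro α
    rw [hA]
    rw [Cardinal.mk_image_eq Subtype.val_injective]
    exact hGmk α
  refine ⟨A, fun α _ => ⟨hsub α, hAmk α⟩, ?_, ?_⟩
  · -- almost disjointness
    intro α hα β hβ hne
    have himg : A α ∩ A β = Subtype.val '' (G α ∩ G β) := by
      rw [hA]; rw [Set.image_inter Subtype.val_injective]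
    rw [himg, Cardinal.mk_image_eq Subtype.val_injective]
    have hle : #(↥(G α ∩ G β)) ≤ #{i : ADAux.Om σ | ADAux.F σ α i = ADAux.F σ β i} := by
      refine Cardinal.mk_le_of_injective
        (f := fun x : ↥(G α ∩ G β) =>
          (⟨(e x.1).1, x.2.1.symm.trans x.2.2⟩ : {i : ADAux.Om σ | ADAux.F σ α i = ADAux.F σ β i})) ?_
      intro x y hxy
      have h1 : (e x.1).1 = (e y.1).1 := by
        have h2 := congrArg Subtype.val hxy; exact h2
      apply Subtype.ext
      apply e.injective
      refine Prod.ext h1 ?_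
      rw [x.2.1, y.2.1, h1]
    exact hle.trans_lt (ADAux.F_pairwise σ hσ α hα β hβ hne)
  · -- pigeonhole part
    intro A' hA'
    have hone : ∀ a : ↥(Set.Iio (Order.succ σ).ord), (A a.1 \ A' a.1).Nonempty := by
      intro a
      rw [Set.nonempty_iff_ne_empty]
      intro h
      rw [Set.diff_eq_empty] at h
      have h2 := Cardinal.mk_le_mk_of_subset h
      rw [hAmk a.1] at h2
      exact (h2.trans_lt (hA' a.1 a.2).2).false
    choose pt hpt using hone
    set φ : ↥(Set.Iio (Order.succ σ).ord) → ADAux.Om σ :=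
      fun a => ⟨pt a, hsub a.1 (hpt a).1⟩ with hφ
    have hβcard : #(↥(Set.Iio (Order.succ σ).ord)) = Cardinal.lift.{u+1} (Order.succ σ) := by
      rw [Ordinal.mk_Iio_ordinal, Cardinal.card_ord]
    have h₁ : ℵ₀ ≤ #(↥(Set.Iio (Order.succ σ).ord)) := by
      rw [hβcard]
      exact Cardinal.aleph0_le_lift.2 (Cardinal.isRegular_succ hσ.aleph0_le).aleph0_le
    have h₂ : #(ADAux.Om σ) < (#(↥(Set.Iio (Order.succ σ).ord))).ord.cof := by
      rw [hβcard, ADAux.mk_Om, ← Cardinal.lift_ord, ← Ordinal.lift_cof,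
        (Cardinal.isRegular_succ hσ.aleph0_le).cof_eq, Cardinal.lift_lt]
      exact Order.lt_succ σ
    obtain ⟨pa, hpa⟩ := Cardinal.infinite_pigeonhole φ h₁ h₂
    refine ⟨Subtype.val '' (φ ⁻¹' {pa}), ?_, ?_, ⟨pa.1, ?_⟩⟩
    · rintro _ ⟨x, _, rfl⟩; exact x.2
    · rw [Cardinal.mk_image_eq Subtype.val_injective, hpa, hβcard]
    · rw [Set.mem_iInter₂]
      rintro α ⟨b, hb, rfl⟩
      have hv : pt b = pa.1 := congrArg Subtype.val hb
      exact hv ▸ hpt b
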